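/- arXiv:1606.07401 — 6 statements merged into one kernel-verified Lean document; each statement's English description precedes it below -/
import Mathlib

section
/- If a continuous map f on a compact metric space X has the local weak specification property, then f has the shadowing property. -/
open MeasureTheory Filter Metric Topology

variable {X : Type*}

/-- Iterate of a homeomorphism by an integer. -/
noncomputable def zit [TopologicalSpace X] (f : X ≃ₜ X) (i : ℤ) (x : X) : X :=
  (f.toEquiv ^ i) x

/-- The dynamical ball `Γ_δ(x)` of a homeomorphism. -/
def Gamma [MetricSpace X] (f : X ≃ₜ X) (δ : ℝ) (x : X) : Set X :=
  {y | ∀ i : ℤ, dist (zit f i x) (zit f i y) ≤ δ}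

/-- Shadowing property for one-sided (ℕ-indexed) pseudo-orbits. -/
def ShadowingN [MetricSpace X] (f : X → X) : Prop :=
  ∀ ε > (0 : ℝ), ∃ δ > (0 : ℝ), ∀ x : ℕ → X,
    (∀ i, dist (f (x i)) (x (i + 1)) < δ) →
    ∃ y, ∀ i, dist (f^[i] y) (x i) < ε

/-- Shadowing property for two-sided (ℤ-indexed) pseudo-orbits of a homeomorphism. -/
def ShadowingZ [MetricSpace X] (f : X ≃ₜ X) : Prop :=
  ∀ ε > (0 : ℝ), ∃ δ > (0 : ℝ), ∀ x : ℤ → X,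
    (∀ i, dist (f (x i)) (x (i + 1)) < δ) →
    ∃ y, ∀ i, dist (zit f i y) (x i) < ε

/-- Local weak specification property. -/
def LocalWeakSpec [MetricSpace X] (f : X → X) : Prop :=
  ∀ ε > (0 : ℝ), ∃ N : ℕ, ∃ δ > (0 : ℝ), ∀ n, N ≤ n → ∀ (k : ℕ) (x : ℕ → X),
    (∀ i, i + 1 < k → dist (f^[n] (x i)) (x (i + 1)) < δ) →
    ∃ y, ∀ i < k, ∀ j, i * n ≤ j → j < (i + 1) * n →
      dist (f^[j] y) (f^[j - i * n] (x i)) < ε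

/-- Local specification property (tracing point is periodic when the chain closes up). -/
def LocalSpec [MetricSpace X] (f : X → X) : Prop :=
  ∀ ε > (0 : ℝ), ∃ N : ℕ, ∃ δ > (0 : ℝ), ∀ n, N ≤ n → ∀ k, 1 ≤ k → ∀ x : ℕ → X,
    (∀ i < k, dist (f^[n] (x i)) (x ((i + 1) % k)) < δ) →
    ∃ y, f^[k * n] y = y ∧ ∀ i < k, ∀ j, i * n ≤ j → j < (i + 1) * n →
      dist (f^[j] y) (f^[j - i * n] (x i)) < ε

/-- A point is periodic for `f`. -/
def IsPeriodicPt' (f : X → X) (y : X) : Prop := ∃ m, 1 ≤ m ∧ f^[m] y = y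

/-- Periodic shadowing property for one-sided pseudo-orbits. -/
def PeriodicShadowingN [MetricSpace X] (f : X → X) : Prop :=
  ∀ ε > (0 : ℝ), ∃ δ > (0 : ℝ), ∀ x : ℕ → X,
    (∀ i, dist (f (x i)) (x (i + 1)) < δ) →
    (∃ M, 1 ≤ M ∧ ∀ i, x (i + M) = x i) →
    ∃ y, IsPeriodicPt' f y ∧ ∀ i, dist (f^[i] y) (x i) < ε

/-- Periodic shadowing property for two-sided pseudo-orbits of a homeomorphism. -/
def PeriodicShadowingZ [MetricSpace X] (f : X ≃ₜ X) : Prop :=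
  ∀ ε > (0 : ℝ), ∃ δ > (0 : ℝ), ∀ x : ℤ → X,
    (∀ i, dist (f (x i)) (x (i + 1)) < δ) →
    (∃ M : ℕ, 1 ≤ M ∧ ∀ i, x (i + M) = x i) →
    ∃ y, IsPeriodicPt' f y ∧ ∀ i, dist (zit f i y) (x i) < ε

/-- Strong periodic shadowing: the shadowing point has the same period as the pseudo-orbit. -/
def StrongPeriodicShadowingZ [MetricSpace X] (f : X ≃ₜ X) : Prop :=
  ∀ ε > (0 : ℝ), ∃ δ > (0 : ℝ), ∀ (N : ℕ), 1 ≤ N → ∀ x : ℤ → X,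
    (∀ i, dist (f (x i)) (x (i + 1)) < δ) →
    (∀ i, x (i + N) = x i) →
    ∃ y, f^[N] y = y ∧ ∀ i, dist (zit f i y) (x i) < ε

/-- Topological transitivity of a homeomorphism (some point has dense two-sided orbit). -/
def TransitiveZ [TopologicalSpace X] (f : X ≃ₜ X) : Prop :=
  ∃ x : X, Dense (Set.range fun n : ℤ => zit f n x)

/-- Measure expansiveness of a homeomorphism. -/
def MeasExpansive [MetricSpace X] [MeasurableSpace X] (f : X ≃ₜ X) : Prop :=
  ∃ δ > (0 : ℝ), ∀ μ : Measure X, IsProbabilityMeasure μ →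
    MeasurePreserving f μ μ → (∀ z : X, μ {z} = 0) →
    ∀ x : X, μ (Gamma f δ x) = 0

/-- Strong measure expansiveness of a homeomorphism. -/
def StrongMeasExpansive [MetricSpace X] [MeasurableSpace X] (f : X ≃ₜ X) : Prop :=
  ∃ δ > (0 : ℝ), ∀ μ : Measure X, IsProbabilityMeasure μ →
    MeasurePreserving f μ μ → ∀ x : X, μ (Gamma f δ x) = μ {x}

/-- Strong measure expansiveness with a specified constant. -/
def StrongMeasExpansiveWith [MetricSpace X] [MeasurableSpace X] (f : X ≃ₜ X) (δ : ℝ) : Prop :=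
  ∀ μ : Measure X, IsProbabilityMeasure μ →
    MeasurePreserving f μ μ → ∀ x : X, μ (Gamma f δ x) = μ {x}

/-- Propagation of pseudo-orbit errors over finitely many steps. -/
lemma pseudo_propagate [MetricSpace X] [CompactSpace X] (f : X → X) (hf : Continuous f)
    (m : ℕ) : ∀ η > (0 : ℝ), ∃ δ > (0 : ℝ), ∀ x : ℕ → X,
      (∀ i, dist (f (x i)) (x (i + 1)) < δ) →
      ∀ i, ∀ m' ≤ m, dist (f^[m'] (x i)) (x (i + m')) < η := by
  induction m with
  | zero =>
    intro η hη
    refine ⟨1, one_pos, fun x _ i m' hm' => ?_⟩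
    interval_cases m'
    simpa using hη
  | succ m ih =>
    intro η hη
    have huc : UniformContinuous f := CompactSpace.uniformContinuous_of_continuous hf
    obtain ⟨δ', hδ', hδ'2⟩ := Metric.uniformContinuous_iff.1 huc (η / 2) (by positivity)
    obtain ⟨δm, hδm, hδm2⟩ := ih (min δ' η) (lt_min hδ' hη)
    refine ⟨min δm (η / 2), lt_min hδm (by positivity), fun x hx i m' hm' => ?_⟩
    have hx' : ∀ j, dist (f (x j)) (x (j + 1)) < δm :=
      fun j => (hx j).trans_le (min_le_left _ _)
    rcases Nat.lt_or_ge m' (m + 1) with h | h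
    · exact (hδm2 x hx' i m' (Nat.lt_succ_iff.1 h)).trans_le (min_le_right _ _)
    · have hm'' : m' = m + 1 := le_antisymm hm' h
      subst hm''
      have h1 : dist (f^[m] (x i)) (x (i + m)) < δ' :=
        (hδm2 x hx' i m le_rfl).trans_le (min_le_left _ _)
      have h2 : dist (f (f^[m] (x i))) (f (x (i + m))) < η / 2 := hδ'2 h1
      have h3 : dist (f (x (i + m))) (x (i + m + 1)) < η / 2 :=
        (hx (i + m)).trans_le (min_le_right _ _)
      calc dist (f^[m + 1] (x i)) (x (i + (m + 1)))
          ≤ dist (f (f^[m] (x i))) (f (x (i + m))) + dist (f (x (i + m))) (x (i + m + 1)) := by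
            rw [Function.iterate_succ_apply', show i + (m + 1) = i + m + 1 from by ring]
            exact dist_triangle _ _ _
        _ < η / 2 + η / 2 := add_lt_add h2 h3
        _ = η := by ring

theorem localWeakSpec_implies_shadowing
    [MetricSpace X] [CompactSpace X] (f : X → X) (hf : Continuous f)
    (hspec : LocalWeakSpec f) : ShadowingN f := by
  intro ε hε
  obtain ⟨N, δ, hδ, hsp⟩ := hspec (ε / 2) (by positivity)
  set n := max N 1 with hn
  have hn0 : 0 < n := lt_of_lt_of_le one_pos (le_max_right _ _)
  have hNn : N ≤ n := le_max_left _ _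
  obtain ⟨δ₁, hδ₁, hprop⟩ :=
    pseudo_propagate f hf n (min δ (ε / 4)) (lt_min hδ (by positivity))
  refine ⟨δ₁, hδ₁, fun x hx => ?_⟩
  -- block sequence
  set b : ℕ → X := fun i => x (i * n) with hb
  have hblocks : ∀ i, dist (f^[n] (b i)) (b (i + 1)) < δ := by
    intro i
    have := hprop x hx (i * n) n le_rfl
    have heq : i * n + n = (i + 1) * n := by ring
    rw [heq] at this
    exact this.trans_le (min_le_left _ _)
  -- tracing points for each number of blocks
  have hchoice : ∀ k : ℕ, ∃ y, ∀ i < k, ∀ j, i * n ≤ j → j < (i + 1) * n →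
      dist (f^[j] y) (f^[j - i * n] (b i)) < ε / 2 := by
    intro k
    exact hsp n hNn k b (fun i _ => hblocks i)
  choose y hy using hchoice
  obtain ⟨z, -, φ, hφmono, hφlim⟩ :=
    isCompact_univ.tendsto_subseq (x := y) (fun k => Set.mem_univ _)
  refine ⟨z, fun j => ?_⟩
  set i := j / n with hi
  have h1 : i * n ≤ j := Nat.div_mul_le_self j n
  have h2 : j < (i + 1) * n := by
    rw [hi]
    exact (Nat.div_lt_iff_lt_mul hn0).1 (Nat.lt_succ_self _)
  set m := j - i * n with hm
  have hjm : i * n + m = j := Nat.add_sub_cancel' h1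
  have hmul : (i + 1) * n = i * n + n := by ring
  have hmn : m < n := by omega
  -- limit bound
  have hlim : dist (f^[j] z) (f^[m] (b i)) ≤ ε / 2 := by
    have hcont : Continuous fun w => dist (f^[j] w) (f^[m] (b i)) :=
      (hf.iterate j).dist continuous_const
    have htend : Tendsto (fun l => dist (f^[j] (y (φ l))) (f^[m] (b i))) atTop
        (𝓝 (dist (f^[j] z) (f^[m] (b i)))) := (hcont.tendsto z).comp hφlim
    refine le_of_tendsto htend (Filter.eventually_atTop.2 ⟨i + 1, fun l hl => ?_⟩) 
    have hik : i < φ l := lt_of_lt_of_le hl hφmono.le_apply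
    exact (hy (φ l) i hik j h1 h2).le
  -- propagation bound
  have hprop2 : dist (f^[m] (x (i * n))) (x j) < ε / 4 := by
    have := hprop x hx (i * n) m hmn.le
    rw [hjm] at this
    exact this.trans_le (min_le_right _ _)
  calc dist (f^[j] z) (x j)
      ≤ dist (f^[j] z) (f^[m] (b i)) + dist (f^[m] (b i)) (x j) := dist_triangle _ _ _
    _ < ε / 2 + ε / 4 := add_lt_add_of_le_of_lt hlim hprop2
    _ < ε := by linarith
end

section
/- A continuous map f on a compact metric space has the limit shadowing property if and only if it has the local limit specification property. -/
open MeasureTheory Filter Metric Topology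

variable {X : Type*}

/-- Limit shadowing property. -/
def LimitShadowing [MetricSpace X] (f : X → X) : Prop :=
  ∀ x : ℕ → X,
    Tendsto (fun i => dist (f (x i)) (x (i + 1))) atTop (nhds 0) →
    ∃ y, Tendsto (fun i => dist (f^[i] y) (x i)) atTop (nhds 0)

/-- Local limit specification property. -/
def LocalLimitSpec [MetricSpace X] (f : X → X) : Prop :=
  ∃ N : ℕ, ∀ n, N ≤ n → ∀ x : ℕ → X,
    Tendsto (fun i => dist (f^[n] (x i)) (x (i + 1))) atTop (nhds 0) →
    ∃ y, ∀ ε > (0 : ℝ), ∃ M : ℕ, ∀ i, M ≤ i → ∀ j ≤ n,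
      dist (f^[j + i * n] y) (f^[j] (x i)) < ε


private lemma dist_image_tendsto_zero [MetricSpace X] [CompactSpace X] {f : X → X}
    (hf : Continuous f) {a b : ℕ → X}
    (h : Tendsto (fun k => dist (a k) (b k)) atTop (nhds 0)) :
    Tendsto (fun k => dist (f (a k)) (f (b k))) atTop (nhds 0) := by
  have uc : UniformContinuous f := CompactSpace.uniformContinuous_of_continuous hf
  have h' : Tendsto (fun k => (a k, b k)) atTop (uniformity X) :=
    (tendsto_uniformity_iff_dist_tendsto_zero (f := fun k => (a k, b k))).2 h
  exact (tendsto_uniformity_iff_dist_tendsto_zero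
    (f := fun k => (f (a k), f (b k)))).1 (Filter.Tendsto.comp uc h')

private lemma iterate_dist_tendsto_zero [MetricSpace X] [CompactSpace X] {f : X → X}
    (hf : Continuous f) {x : ℕ → X}
    (hx : Tendsto (fun i => dist (f (x i)) (x (i + 1))) atTop (nhds 0)) (m : ℕ) :
    Tendsto (fun k => dist (f^[m] (x k)) (x (k + m))) atTop (nhds 0) := by
  induction m with
  | zero => simpa using tendsto_const_nhds
  | succ m ih =>
    have h1 : Tendsto (fun k => dist (f (f^[m] (x k))) (f (x (k + m)))) atTop (nhds 0) :=
      dist_image_tendsto_zero hf ih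
    have h2 : Tendsto (fun k => dist (f (x (k + m))) (x (k + m + 1))) atTop (nhds 0) :=
      hx.comp (tendsto_atTop_atTop.2 fun b => ⟨b, fun k hk => le_trans hk (Nat.le_add_right _ _)⟩)
    have h3 : Tendsto (fun k => dist (f (f^[m] (x k))) (f (x (k + m)))
        + dist (f (x (k + m))) (x (k + m + 1))) atTop (nhds 0) := by
      simpa using h1.add h2
    refine squeeze_zero (fun k => dist_nonneg) (fun k => ?_) h3
    rw [Function.iterate_succ_apply']
    calc dist (f (f^[m] (x k))) (x (k + (m + 1)))
        ≤ dist (f (f^[m] (x k))) (f (x (k + m))) + dist (f (x (k + m))) (x (k + (m + 1))) :=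
          dist_triangle _ _ _
      _ = _ := by rw [← add_assoc]

private lemma eventually_lt_of_tendsto_zero {u : ℕ → ℝ}
    (h : Tendsto u atTop (nhds 0)) {ε : ℝ} (hε : 0 < ε) :
    ∃ K : ℕ, ∀ k, K ≤ k → u k < ε := by
  have := h.eventually (gt_mem_nhds hε)
  rw [eventually_atTop] at this
  obtain ⟨K, hK⟩ := this
  exact ⟨K, hK⟩

theorem limitShadowing_iff_localLimitSpec
    [MetricSpace X] [CompactSpace X] (f : X → X) (hf : Continuous f) :
    LimitShadowing f ↔ LocalLimitSpec f := by
  constructor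
  · -- LimitShadowing → LocalLimitSpec
    intro hls
    refine ⟨1, fun n hn x hx => ?_⟩
    have hn0 : 0 < n := hn
    set z : ℕ → X := fun k => f^[k % n] (x (k / n)) with hz
    have hbound : ∀ k, dist (f (z k)) (z (k + 1))
        ≤ dist (f^[n] (x (k / n))) (x (k / n + 1)) := by
      intro k
      have hk : n * (k / n) + k % n = k := Nat.div_add_mod k n
      have hr : k % n < n := Nat.mod_lt _ hn0
      rcases lt_or_eq_of_le (Nat.succ_le_of_lt hr) with h1 | h1
      · -- k % n + 1 < n
        have hk1 : k + 1 = (k % n + 1) + n * (k / n) := by omega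
        have hd : (k + 1) / n = k / n := by
          rw [hk1, Nat.add_mul_div_left _ _ hn0, Nat.div_eq_of_lt h1, Nat.zero_add]
        have hm : (k + 1) % n = k % n + 1 := by
          rw [hk1, Nat.add_mul_mod_self_left, Nat.mod_eq_of_lt h1]
        have : f (z k) = z (k + 1) := by
          simp only [hz, hd, hm, ← Function.iterate_succ_apply' f]
        rw [this, dist_self]
        exact dist_nonneg
      · -- k % n + 1 = n
        have hk1 : k + 1 = n * (k / n + 1) := by rw [Nat.mul_add, mul_one]; omega
        have hd : (k + 1) / n = k / n + 1 := by
          rw [hk1, Nat.mul_div_cancel_left _ hn0]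
        have hm : (k + 1) % n = 0 := by
          rw [hk1, Nat.mul_mod_right]
        have hfz : f (z k) = f^[n] (x (k / n)) := by
          simp only [hz, ← Function.iterate_succ_apply' f, h1]
        have hz1 : z (k + 1) = x (k / n + 1) := by
          simp only [hz, hd, hm, Function.iterate_zero_apply]
        rw [hfz, hz1]
    have hdiv : Tendsto (fun k : ℕ => k / n) atTop atTop :=
      tendsto_atTop_atTop.2 fun b => ⟨b * n, fun k hk => (Nat.le_div_iff_mul_le hn0).2 hk⟩
    have hzps : Tendsto (fun k => dist (f (z k)) (z (k + 1))) atTop (nhds 0) :=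
      squeeze_zero (fun k => dist_nonneg) hbound (hx.comp hdiv)
    obtain ⟨y, hy⟩ := hls z hzps
    refine ⟨y, fun ε hε => ?_⟩
    obtain ⟨K1, hK1⟩ := eventually_lt_of_tendsto_zero hy (half_pos hε)
    obtain ⟨K2, hK2⟩ := eventually_lt_of_tendsto_zero hx (half_pos hε)
    refine ⟨max K1 K2, fun i hi j hj => ?_⟩
    have hiK1 : K1 ≤ i := le_trans (le_max_left _ _) hi
    have hiK2 : K2 ≤ i := le_trans (le_max_right _ _) hi
    rcases lt_or_eq_of_le hj with hjn | hjn
    · -- j < n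
      have hzk : z (j + i * n) = f^[j] (x i) := by
        have hd : (j + i * n) / n = i := by
          rw [mul_comm, Nat.add_mul_div_left _ _ hn0, Nat.div_eq_of_lt hjn, Nat.zero_add]
        have hm : (j + i * n) % n = j := by
          rw [mul_comm, Nat.add_mul_mod_self_left, Nat.mod_eq_of_lt hjn]
        simp only [hz, hd, hm]
      have hk1 : K1 ≤ j + i * n := le_trans hiK1 (le_trans (Nat.le_mul_of_pos_right _ hn0)
        (Nat.le_add_left _ _))
      calc dist (f^[j + i * n] y) (f^[j] (x i)) = dist (f^[j + i * n] y) (z (j + i * n)) := by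
            rw [hzk]
        _ < ε / 2 := hK1 _ hk1
        _ < ε := by linarith
    · -- j = n
      subst hjn
      have heq : j + i * j = (i + 1) * j := by ring
      have hzk : z ((i + 1) * j) = x (i + 1) := by
        have hd : ((i + 1) * j) / j = i + 1 := Nat.mul_div_cancel _ hn0
        have hm : ((i + 1) * j) % j = 0 := Nat.mul_mod_left _ _
        simp only [hz, hd, hm, Function.iterate_zero_apply]
      have hk1 : K1 ≤ (i + 1) * j :=
        le_trans hiK1 (le_trans (Nat.le_succ i) (Nat.le_mul_of_pos_right _ hn0))
      calc dist (f^[j + i * j] y) (f^[j] (x i))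
          ≤ dist (f^[(i + 1) * j] y) (z ((i + 1) * j)) + dist (z ((i + 1) * j)) (f^[j] (x i)) := by
            rw [← heq]; exact dist_triangle _ _ _
        _ < ε / 2 + ε / 2 := by
            refine add_lt_add (hK1 _ hk1) ?_
            rw [hzk, dist_comm]
            exact hK2 i hiK2
        _ = ε := by ring
  · -- LocalLimitSpec → LimitShadowing
    rintro ⟨N, hspec⟩ x hx
    set n : ℕ := N + 1 with hn
    have hn0 : 0 < n := Nat.succ_pos _
    set z : ℕ → X := fun i => x (i * n) with hz
    have hzps : Tendsto (fun i => dist (f^[n] (z i)) (z (i + 1))) atTop (nhds 0) := by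
      have h1 := (iterate_dist_tendsto_zero hf hx n).comp
        (tendsto_atTop_atTop.2 fun b => ⟨b, fun i hi =>
          le_trans hi (Nat.le_mul_of_pos_right _ hn0)⟩ :
          Tendsto (fun i : ℕ => i * n) atTop atTop)
      have : (fun i => dist (f^[n] (z i)) (z (i + 1)))
          = (fun i : ℕ => dist (f^[n] (x (i * n))) (x (i * n + n))) := by
        funext i
        simp only [hz, add_mul, one_mul]
      rw [this]
      exact h1
    obtain ⟨y, hy⟩ := hspec n (Nat.le_succ _) z hzps
    refine ⟨y, ?_⟩
    rw [Metric.tendsto_atTop]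
    intro ε hε
    obtain ⟨M1, hM1⟩ := hy (ε / 2) (half_pos hε)
    have hjK : ∀ j, ∃ K, ∀ k, K ≤ k → dist (f^[j] (x k)) (x (k + j)) < ε / 2 := fun j =>
      eventually_lt_of_tendsto_zero (iterate_dist_tendsto_zero hf hx j) (half_pos hε)
    choose g hg using hjK
    set K2 : ℕ := (Finset.range (n + 1)).sup g with hK2
    refine ⟨(max M1 K2 + 1) * n, fun k hk => ?_⟩
    set i := k / n with hi
    set j := k % n with hj
    have hjlt : j < n := Nat.mod_lt _ hn0
    have hik : n * i + j = k := Nat.div_add_mod k n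
    have hiM : max M1 K2 + 1 ≤ i := by
      rw [hi]
      exact (Nat.le_div_iff_mul_le hn0).2 hk
    have hiM1 : M1 ≤ i := le_trans (le_trans (le_max_left _ _) (Nat.le_succ _)) hiM
    have hiK2 : K2 ≤ i * n := le_trans (le_trans (le_trans (le_max_right _ _) (Nat.le_succ _)) hiM)
      (Nat.le_mul_of_pos_right _ hn0)
    have hspec_i := hM1 i hiM1 j (le_of_lt hjlt)
    have hgK : dist (f^[j] (x (i * n))) (x (i * n + j)) < ε / 2 :=
      hg j (i * n) (le_trans (Finset.le_sup (Finset.mem_range.2 (lt_of_lt_of_le hjlt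
        (Nat.le_succ _)))) hiK2)
    have hkey : j + i * n = k := by rw [mul_comm]; omega
    have hxk : x k = x (i * n + j) := by rw [show i * n + j = k by rw [mul_comm]; omega]
    have hd : dist (f^[k] y) (x k) < ε := by
      calc dist (f^[k] y) (x k)
          ≤ dist (f^[j + i * n] y) (f^[j] (z i)) + dist (f^[j] (x (i * n))) (x (i * n + j)) := by
            rw [hkey, hxk]
            exact dist_triangle _ _ _
        _ < ε / 2 + ε / 2 := add_lt_add hspec_i hgK
        _ = ε := by ring
    rw [Real.dist_eq, sub_zero, abs_of_nonneg dist_nonneg]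
    exact hd
end

section
/- If a continuous map f on a compact metric space has the local specification property, then f has the periodic shadowing property. -/
open MeasureTheory Filter Metric Topology

variable {X : Type*}

private lemma per_mul' {Y : Type*} {x : ℕ → Y} {M : ℕ} (hper : ∀ i, x (i + M) = x i) :
    ∀ t i, x (i + M * t) = x i := by
  intro t
  induction t with
  | zero => simp
  | succ t ih =>
    intro i
    have h : i + M * (t + 1) = (i + M * t) + M := by ring
    rw [h, hper, ih]

private lemma pseudo_trace' {Y : Type*} [MetricSpace Y] [CompactSpace Y] (f : Y → Y)
    (hf : Continuous f) :
    ∀ n : ℕ, ∀ η > (0 : ℝ), ∃ δ > (0 : ℝ), δ ≤ η ∧ ∀ x : ℕ → Y,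
      (∀ i, dist (f (x i)) (x (i + 1)) < δ) →
      ∀ i, ∀ m ≤ n, dist (f^[m] (x i)) (x (i + m)) < η := by
  have huc : UniformContinuous f := CompactSpace.uniformContinuous_of_continuous hf
  intro n
  induction n with
  | zero =>
    intro η hη
    refine ⟨η, hη, le_rfl, fun x hx i m hm => ?_⟩
    obtain rfl := Nat.le_zero.mp hm
    simpa using hη
  | succ n ih =>
    intro η hη
    obtain ⟨α, hα, hαuc⟩ := Metric.uniformContinuous_iff.mp huc (η / 2) (by positivity)
    obtain ⟨δ, hδ, hδle, hP⟩ := ih (min α (η / 2)) (by positivity)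
    refine ⟨δ, hδ, hδle.trans ((min_le_right _ _).trans (by linarith)), fun x hx i m hm => ?_⟩
    rcases Nat.lt_or_ge m (n + 1) with h | h
    · exact lt_of_lt_of_le (hP x hx i m (Nat.lt_succ_iff.mp h))
        (le_trans (min_le_right _ _) (by linarith))
    · have hm' : m = n + 1 := le_antisymm hm h
      subst hm'
      have h1 : dist (f^[n] (x i)) (x (i + n)) < min α (η / 2) := hP x hx i n le_rfl
      have h2 : dist (f (f^[n] (x i))) (f (x (i + n))) < η / 2 :=
        hαuc (lt_of_lt_of_le h1 (min_le_left _ _))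
      have h3 : dist (f (x (i + n))) (x (i + n + 1)) < δ := hx (i + n)
      have hδη : δ ≤ η / 2 := hδle.trans (min_le_right _ _)
      calc dist (f^[n + 1] (x i)) (x (i + (n + 1)))
          = dist (f (f^[n] (x i))) (x (i + n + 1)) := by
            rw [show i + (n + 1) = i + n + 1 from rfl, Function.iterate_succ_apply']
        _ ≤ dist (f (f^[n] (x i))) (f (x (i + n))) + dist (f (x (i + n))) (x (i + n + 1)) :=
            dist_triangle _ _ _
        _ < η / 2 + δ := add_lt_add h2 h3
        _ ≤ η := by linarith

theorem localSpec_implies_periodicShadowing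
    [MetricSpace X] [CompactSpace X] (f : X → X) (hf : Continuous f)
    (hspec : LocalSpec f) : PeriodicShadowingN f := by
  intro ε hε
  obtain ⟨N, δs, hδs, hspec'⟩ := hspec (ε / 2) (by positivity)
  set n := max N 1 with hn
  have hn1 : 1 ≤ n := le_max_right _ _
  have hnN : N ≤ n := le_max_left _ _
  obtain ⟨δ, hδ, hδle, hP⟩ := pseudo_trace' f hf n (min δs (ε / 2)) (by positivity)
  refine ⟨δ, hδ, fun x hx hper => ?_⟩
  obtain ⟨k, hM, hperM⟩ := hper
  have hxmul : ∀ t i, x (i + k * t) = x i := per_mul' hperM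
  have hknpos : 0 < k * n := Nat.mul_pos (by omega) (by omega)
  have hchain : ∀ i < k, dist (f^[n] (x (i * n))) (x (((i + 1) % k) * n)) < δs := by
    intro i hi
    have h1 : dist (f^[n] (x (i * n))) (x (i * n + n)) < min δs (ε / 2) :=
      hP x hx (i * n) n le_rfl
    have h2 : x (i * n + n) = x (((i + 1) % k) * n) := by
      rcases Nat.lt_or_ge (i + 1) k with h | h
      · rw [Nat.mod_eq_of_lt h]; congr 1; ring
      · have hik : i + 1 = k := by omega
        rw [hik, Nat.mod_self, Nat.zero_mul]
        have he : i * n + n = 0 + k * n := by rw [← hik]; ring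
        rw [he, hxmul n 0]
    rw [h2] at h1
    exact lt_of_lt_of_le h1 (min_le_left _ _)
  obtain ⟨y, hy, hclose⟩ := hspec' n hnN k hM (fun i => x (i * n)) hchain
  refine ⟨y, ⟨k * n, hknpos, hy⟩, ?_⟩
  have hyq : ∀ q, f^[(k * n) * q] y = y := fun q => by
    rw [Function.iterate_mul]; exact Function.iterate_fixed hy q
  have key : ∀ j < k * n, dist (f^[j] y) (x j) < ε := by
    intro j hj
    set i := j / n with hi
    have hin : i * n ≤ j := Nat.div_mul_le_self j n
    have e1 : i * n + j % n = j := by rw [hi, mul_comm]; exact Nat.div_add_mod j n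
    have e2 : j % n < n := Nat.mod_lt _ (by omega)
    have hjn : j < (i + 1) * n := by
      calc j = i * n + j % n := e1.symm
        _ < i * n + n := Nat.add_lt_add_left e2 _
        _ = (i + 1) * n := by ring
    have hik : i < k := (Nat.div_lt_iff_lt_mul (by omega)).mpr hj
    have h1 : dist (f^[j] y) (f^[j - i * n] (x (i * n))) < ε / 2 := hclose i hik j hin hjn
    have h2 : dist (f^[j - i * n] (x (i * n))) (x (i * n + (j - i * n))) < min δs (ε / 2) :=
      hP x hx (i * n) (j - i * n) (by omega)
    have h3 : i * n + (j - i * n) = j := by omega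
    rw [h3] at h2
    calc dist (f^[j] y) (x j)
        ≤ dist (f^[j] y) (f^[j - i * n] (x (i * n)))
          + dist (f^[j - i * n] (x (i * n))) (x j) := dist_triangle _ _ _
      _ < ε / 2 + ε / 2 := add_lt_add h1 (lt_of_lt_of_le h2 (min_le_right _ _))
      _ = ε := by ring
  intro j
  have hdecomp : j % (k * n) + (k * n) * (j / (k * n)) = j := Nat.mod_add_div j (k * n)
  have hxj : x j = x (j % (k * n)) := by
    have he : j % (k * n) + k * (n * (j / (k * n))) = j := by
      rw [← mul_assoc]; exact hdecomp
    conv_lhs => rw [← he, hxmul]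
  have hyj : f^[j] y = f^[j % (k * n)] y := by
    conv_lhs => rw [← hdecomp]
    rw [Function.iterate_add_apply, hyq]
  rw [hyj, hxj]
  exact key _ (Nat.mod_lt _ hknpos)
end

section
/- A homeomorphism without periodic points of a compact metric space is measure expansive if and only if it is strongly measure expansive. -/
open MeasureTheory Filter Metric Topology

variable {X : Type*}

/-- With no periodic points, every invariant probability measure is non-atomic. -/
lemma no_atoms_of_no_periodic_points
    [MetricSpace X] [MeasurableSpace X] [BorelSpace X]
    (f : X ≃ₜ X) (hnoper : ∀ x : X, ¬ IsPeriodicPt' (⇑f) x)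
    (μ : Measure X) (hμ : IsProbabilityMeasure μ)
    (hf : MeasurePreserving f μ μ) (z : X) : μ {z} = 0 := by
  by_contra h
  have hinjf : Function.Injective (⇑f) := f.injective
  -- orbit points are pairwise distinct
  have hinj : Function.Injective fun n : ℕ => (⇑f)^[n] z := by
    have key : ∀ m n : ℕ, m < n → (⇑f)^[m] z = (⇑f)^[n] z → False := by
      intro m n hlt hmn
      refine hnoper z ⟨n - m, by omega, ?_⟩
      apply hinjf.iterate m
      calc (⇑f)^[m] ((⇑f)^[n - m] z) = (⇑f)^[m + (n - m)] z := by
            rw [Function.iterate_add_apply]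
        _ = (⇑f)^[n] z := by rw [show m + (n - m) = n by omega]
        _ = (⇑f)^[m] z := hmn.symm
    intro m n hmn
    by_contra hne
    rcases lt_or_gt_of_ne hne with hlt | hlt
    · exact key m n hlt hmn
    · exact key n m hlt hmn.symm
  -- all orbit points have the same mass
  have heq : ∀ n : ℕ, μ {(⇑f)^[n] z} = μ {z} := by
    intro n
    have hpre : ((⇑f)^[n]) ⁻¹' {(⇑f)^[n] z} = {z} := by
      ext w
      simp only [Set.mem_preimage, Set.mem_singleton_iff]
      exact ⟨fun hw => hinjf.iterate n hw, fun hw => by rw [hw]⟩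
    have := (hf.iterate n).measure_preimage
      (measurableSet_singleton ((⇑f)^[n] z)).nullMeasurableSet
    rw [hpre] at this
    exact this.symm
  -- the union of the orbit has infinite measure, contradiction
  have hdisj : Pairwise (Function.onFun Disjoint fun n : ℕ => ({(⇑f)^[n] z} : Set X)) := by
    intro m n hmn
    simp only [Function.onFun, Set.disjoint_singleton]
    exact fun hc => hmn (hinj hc)
  have hU := measure_iUnion (μ := μ) hdisj (fun n => measurableSet_singleton _)
  have htop : μ (⋃ n : ℕ, ({(⇑f)^[n] z} : Set X)) = ⊤ := by
    rw [hU]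
    simp only [heq]
    exact ENNReal.tsum_const_eq_top_of_ne_zero h
  have hle : μ (⋃ n : ℕ, ({(⇑f)^[n] z} : Set X)) ≤ 1 := prob_le_one
  rw [htop] at hle
  exact absurd hle (by simp)

theorem measExpansive_iff_strongMeasExpansive_of_no_periodic_points
    [MetricSpace X] [CompactSpace X] [MeasurableSpace X] [BorelSpace X]
    (f : X ≃ₜ X) (hnoper : ∀ x : X, ¬ IsPeriodicPt' (⇑f) x) :
    MeasExpansive f ↔ StrongMeasExpansive f := by
  constructor
  · rintro ⟨δ, hδ, hexp⟩
    refine ⟨δ, hδ, fun μ hμ hf x => ?_⟩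
    rw [no_atoms_of_no_periodic_points f hnoper μ hμ hf x]
    exact hexp μ hμ hf (no_atoms_of_no_periodic_points f hnoper μ hμ hf) x
  · rintro ⟨δ, hδ, hstr⟩
    refine ⟨δ, hδ, fun μ hμ hf hna x => ?_⟩
    rw [hstr μ hμ hf x]
    exact hna x
end

section
/- If f is a strongly measure expansive homeomorphism of a compact metric space with strong measure expansivity constant δ, then the restriction of f to its set of periodic points is expansive with expansive constant δ: if p, q are periodic points with q ∈ Γ_δ(p), then q = p. -/
open MeasureTheory Filter Metric Topology
open ENNReal

variable {X : Type*}

theorem strongMeasExpansive_expansive_on_periodic_points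
    [MetricSpace X] [CompactSpace X] [MeasurableSpace X] [BorelSpace X]
    (f : X ≃ₜ X) (δ : ℝ) (hδ : 0 < δ) (hsme : StrongMeasExpansiveWith f δ)
    (p q : X) (hp : IsPeriodicPt' (⇑f) p) (hq : IsPeriodicPt' (⇑f) q)
    (hq' : q ∈ Gamma f δ p) : q = p := by
  by_contra hne
  obtain ⟨N, hN1, hNq⟩ := hq
  obtain ⟨n, rfl⟩ : ∃ n, N = n + 1 := ⟨N - 1, (Nat.succ_pred_eq_of_pos hN1).symm⟩
  have hmf : Measurable (⇑f) := f.continuous.measurable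
  have hper : Function.IsPeriodicPt (⇑f) (n + 1) q := hNq
  set μ : Measure X :=
    (((n + 1 : ℕ)) : ℝ≥0∞)⁻¹ • ∑ i ∈ Finset.range (n + 1), Measure.dirac (f^[i] q) with hμ
  have hncast : (((n + 1 : ℕ)) : ℝ≥0∞) ≠ 0 := Nat.cast_ne_zero.mpr (Nat.succ_ne_zero n)
  have hncast' : (((n + 1 : ℕ)) : ℝ≥0∞) ≠ ⊤ := ENNReal.natCast_ne_top _
  have hsum_shift : ∑ i ∈ Finset.range (n + 1), Measure.dirac (f^[i + 1] q)
      = ∑ i ∈ Finset.range (n + 1), Measure.dirac (f^[i] q) := by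
    rw [← Fin.sum_univ_eq_sum_range (fun i => Measure.dirac (f^[i + 1] q)),
        ← Fin.sum_univ_eq_sum_range (fun i => Measure.dirac (f^[i] q)),
        ← Equiv.sum_comp (finRotate (n + 1)) (fun i : Fin (n + 1) => Measure.dirac (f^[(i : ℕ)] q))]
    refine Finset.sum_congr rfl fun i _ => ?_
    have h1 : ((finRotate (n + 1)) i : ℕ) = ((i : ℕ) + 1) % (n + 1) := by
      rw [finRotate_succ_apply, Fin.add_def]
      simp
    simp only [h1, hper.iterate_mod_apply]
  have hmap : Measure.map f μ = μ := by
    rw [hμ, Measure.map_smul]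
    congr 1
    have : Measure.map f (∑ i ∈ Finset.range (n + 1), Measure.dirac (f^[i] q))
        = ∑ i ∈ Finset.range (n + 1), Measure.map f (Measure.dirac (f^[i] q)) := by
      classical
      induction (Finset.range (n + 1)) using Finset.induction with
      | empty => simp
      | insert _ _ hx ih => simp [Finset.sum_insert hx, Measure.map_add _ _ hmf, ih]
    rw [this]
    calc ∑ i ∈ Finset.range (n + 1), Measure.map f (Measure.dirac (f^[i] q))
        = ∑ i ∈ Finset.range (n + 1), Measure.dirac (f^[i + 1] q) := by
          refine Finset.sum_congr rfl fun i _ => ?_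
          rw [Measure.map_dirac' hmf, ← Function.iterate_succ_apply' f]
      _ = _ := hsum_shift
  have hprob : IsProbabilityMeasure μ := by
    constructor
    rw [hμ, Measure.smul_apply, Measure.finset_sum_apply]
    simp only [measure_univ, Finset.sum_const, Finset.card_range, nsmul_eq_mul, mul_one,
      smul_eq_mul]
    exact ENNReal.inv_mul_cancel hncast hncast'
  have hG := hsme μ hprob ⟨hmf, hmap⟩ p
  have hsub : ({p, q} : Set X) ⊆ Gamma f δ p := by
    rintro x (rfl | rfl)
    · intro i; simp [le_of_lt hδ]
    · exact hq'
  have hq0 : (((n + 1 : ℕ)) : ℝ≥0∞)⁻¹ ≤ μ {q} := by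
    rw [hμ]
    simp only [Measure.smul_apply, Measure.finset_sum_apply, smul_eq_mul]
    have h0 : (Measure.dirac (f^[0] q)) {q} = 1 := by
      simp [Measure.dirac_apply_of_mem]
    calc (((n + 1 : ℕ)) : ℝ≥0∞)⁻¹ = (((n + 1 : ℕ)) : ℝ≥0∞)⁻¹ * (Measure.dirac (f^[0] q)) {q} := by
          rw [h0, mul_one]
      _ ≤ _ := mul_le_mul_right
          (Finset.single_le_sum (f := fun i => (Measure.dirac (f^[i] q)) {q})
            (fun i _ => zero_le) (Finset.mem_range.mpr (Nat.succ_pos n))) _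
  have hunion : μ {p} + μ {q} ≤ μ {p} := by
    have : μ ({p} ∪ {q}) = μ {p} + μ {q} :=
      measure_union (by simpa [Set.disjoint_singleton] using Ne.symm hne)
        (measurableSet_singleton q)
    calc μ {p} + μ {q} = μ ({p} ∪ {q}) := this.symm
      _ ≤ μ (Gamma f δ p) := measure_mono (by simpa [Set.union_singleton, Set.pair_comm] using hsub)
      _ = μ {p} := hG
  have hfin : μ {p} ≠ ⊤ := measure_ne_top μ _
  have : μ {q} ≤ 0 :=
    ENNReal.le_of_add_le_add_left hfin (hunion.trans_eq (add_zero _).symm)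
  have : μ {q} = 0 := le_antisymm this (zero_le)
  rw [this] at hq0
  exact absurd (le_antisymm hq0 (zero_le)).symm.symm (ENNReal.inv_ne_zero.mpr hncast')
end

section
/- If f is a strongly measure expansive homeomorphism of a compact metric space with the shadowing property, then f has the strong periodic shadowing property: every periodic δ-pseudo orbit of period N is ε-shadowed by a periodic point of period N (not merely some period). -/
open MeasureTheory Filter Metric Topology

variable {X : Type*}

open BoundedContinuousFunction
open scoped NNReal ENNReal

lemma zit_zero [TopologicalSpace X] (f : X ≃ₜ X) (x : X) : zit f 0 x = x := by
  simp [zit]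

lemma zit_one [TopologicalSpace X] (f : X ≃ₜ X) (x : X) : zit f 1 x = f x := by
  simp [zit]

lemma zit_neg_one [TopologicalSpace X] (f : X ≃ₜ X) (x : X) : zit f (-1) x = f.symm x := by
  simp [zit]

lemma zit_add [TopologicalSpace X] (f : X ≃ₜ X) (i j : ℤ) (x : X) :
    zit f (i + j) x = zit f i (zit f j x) := by
  simp [zit, zpow_add, Equiv.Perm.mul_apply]

lemma zit_natCast [TopologicalSpace X] (f : X ≃ₜ X) (n : ℕ) (x : X) :
    zit f (n : ℤ) x = f^[n] x := by
  induction n generalizing x with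
  | zero => simp [zit]
  | succ n ih =>
    rw [Nat.cast_succ, zit_add, zit_one, Function.iterate_succ_apply, ih]

lemma continuous_zit [TopologicalSpace X] (f : X ≃ₜ X) (i : ℤ) :
    Continuous (zit f i) := by
  induction i using Int.induction_on with
  | zero => simpa using continuous_id.congr (fun x => (zit_zero f x).symm)
  | succ n ih =>
    exact (ih.comp f.continuous).congr fun x => by
      show zit f _ (f x) = _
      rw [← zit_one f x, ← zit_add]
  | pred n ih =>
    exact (ih.comp f.symm.continuous).congr fun x => by
      show zit f _ (f.symm x) = _
      rw [← zit_neg_one f x, ← zit_add]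
      ring_nf

noncomputable def natU : Ultrafilter ℕ := Ultrafilter.of atTop

lemma natU_le : (natU : Filter ℕ) ≤ atTop := Ultrafilter.of_le _

noncomputable def cesaro [TopologicalSpace X] (f : X ≃ₜ X) (y : X) (N : ℕ)
    (φ : X →ᵇ ℝ≥0) (n : ℕ) : ℝ :=
  (∑ j ∈ Finset.range (N * (n + 1)), (φ (f^[j] y) : ℝ)) / (N * (n + 1))

section cesaro
variable [TopologicalSpace X] (f : X ≃ₜ X) (y : X) (N : ℕ)

lemma bcf_bound (φ : X →ᵇ ℝ≥0) : ∃ C : ℝ, 0 ≤ C ∧ ∀ x, (φ x : ℝ) ≤ C := by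
  obtain ⟨C, hC⟩ := φ.map_bounded'
  rcases isEmpty_or_nonempty X with h | h
  · exact ⟨0, le_refl _, fun x => (IsEmpty.false x).elim⟩
  · obtain ⟨x₀⟩ := h
    refine ⟨(φ x₀ : ℝ) + max C 0, by positivity, fun x => ?_⟩
    have h1 := hC x x₀
    rw [NNReal.dist_eq] at h1
    rw [show φ.toFun x = φ x from rfl, show φ.toFun x₀ = φ x₀ from rfl] at h1
    have := abs_le.mp h1
    have h2 : C ≤ max C 0 := le_max_left _ _
    linarith [this.1, this.2]

lemma cesaro_nonneg (φ : X →ᵇ ℝ≥0) (n : ℕ) : 0 ≤ cesaro f y N φ n := by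
  apply div_nonneg _ (by positivity)
  exact Finset.sum_nonneg fun j _ => (φ _).2

lemma cesaro_le (φ : X →ᵇ ℝ≥0) (C : ℝ) (hC : ∀ x, (φ x : ℝ) ≤ C) (hC0 : 0 ≤ C) (n : ℕ) :
    cesaro f y N φ n ≤ C := by
  rcases Nat.eq_zero_or_pos N with h | h
  · simp [cesaro, h, hC0]
  have hpos : (0:ℝ) < (N : ℝ) * ((n:ℝ) + 1) := by positivity
  rw [cesaro, div_le_iff₀ hpos]
  calc (∑ j ∈ Finset.range (N * (n + 1)), (φ (f^[j] y) : ℝ))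
      ≤ ∑ _j ∈ Finset.range (N * (n + 1)), C := Finset.sum_le_sum fun j _ => hC _
    _ = (N * (n + 1) : ℕ) * C := by rw [Finset.sum_const, Finset.card_range]; push_cast; ring
    _ = C * ((N:ℝ) * ((n:ℝ) + 1)) := by push_cast; ring

lemma cesaro_add (φ ψ : X →ᵇ ℝ≥0) (n : ℕ) :
    cesaro f y N (φ + ψ) n = cesaro f y N φ n + cesaro f y N ψ n := by
  have h : ∀ j ∈ Finset.range (N * (n + 1)),
      (((φ + ψ) (f^[j] y) : ℝ)) = (φ (f^[j] y) : ℝ) + (ψ (f^[j] y) : ℝ) := by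
    intro j _
    rw [BoundedContinuousFunction.add_apply]
    push_cast
    ring
  rw [cesaro, Finset.sum_congr rfl h, Finset.sum_add_distrib, add_div]
  rfl

lemma cesaro_smul (c : ℝ≥0) (φ : X →ᵇ ℝ≥0) (n : ℕ) :
    cesaro f y N (c • φ) n = c * cesaro f y N φ n := by
  have h : ∀ j ∈ Finset.range (N * (n + 1)),
      (((c • φ) (f^[j] y) : ℝ)) = (c : ℝ) * (φ (f^[j] y) : ℝ) := by
    intro j _
    rw [BoundedContinuousFunction.coe_smul]
    simp [NNReal.smul_def]
  rw [cesaro, Finset.sum_congr rfl h, ← Finset.mul_sum, mul_div_assoc]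
  rfl

lemma cesaro_mono (φ ψ : X →ᵇ ℝ≥0) (h : ∀ x, φ x ≤ ψ x) (n : ℕ) :
    cesaro f y N φ n ≤ cesaro f y N ψ n := by
  rw [cesaro, cesaro]
  gcongr with j hj
  exact_mod_cast h _

lemma cesaro_one (hN : 1 ≤ N) (n : ℕ) : cesaro f y N 1 n = 1 := by
  have h : (0:ℝ) < ((N * (n+1) : ℕ) : ℝ) := by
    have : 0 < N * (n+1) := Nat.mul_pos hN (Nat.succ_pos n)
    exact_mod_cast this
  have h1 : ∀ j ∈ Finset.range (N * (n + 1)), (((1 : X →ᵇ ℝ≥0) (f^[j] y) : ℝ)) = 1 := by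
    intro j _; simp
  rw [cesaro, Finset.sum_congr rfl h1, Finset.sum_const, Finset.card_range, nsmul_eq_mul, mul_one]
  rw [div_eq_one_iff_eq (by push_cast at h ⊢; linarith)]
  push_cast
  ring

end cesaro

section cesaro2
variable [TopologicalSpace X] (f : X ≃ₜ X) (y : X) (N : ℕ)

lemma cesaro_shift (φ : X →ᵇ ℝ≥0) (C : ℝ) (hC : ∀ x, (φ x : ℝ) ≤ C) (n : ℕ) :
    |cesaro f y N (φ.compContinuous (⟨f, f.continuous⟩ : C(X,X))) n - cesaro f y N φ n|
      ≤ 2 * C / (N * (n + 1)) := by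
  rcases Nat.eq_zero_or_pos N with h | h
  · have hC0 : (0:ℝ) ≤ C := le_trans (φ y).2 (hC y)
    simp [cesaro, h]
  have hm : (0:ℝ) < (N:ℝ) * ((n:ℝ) + 1) := by positivity
  set m := N * (n + 1) with hmdef
  have key : (∑ j ∈ Finset.range m, ((φ.compContinuous (⟨f, f.continuous⟩ : C(X,X))) (f^[j] y) : ℝ))
      = (∑ j ∈ Finset.range m, (φ (f^[j] y) : ℝ)) + (φ (f^[m] y) : ℝ) - (φ y : ℝ) := by
    have h1 : ∀ j ∈ Finset.range m,
        ((φ.compContinuous (⟨f, f.continuous⟩ : C(X,X))) (f^[j] y) : ℝ)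
          = (φ (f^[j+1] y) : ℝ) := by
      intro j _
      rw [BoundedContinuousFunction.compContinuous_apply]
      rw [Function.iterate_succ_apply']
      rfl
    rw [Finset.sum_congr rfl h1]
    have h2 := Finset.sum_range_succ' (fun j => (φ (f^[j] y) : ℝ)) m
    have h3 := Finset.sum_range_succ (fun j => (φ (f^[j] y) : ℝ)) m
    rw [h3] at h2
    simp only [Function.iterate_zero_apply] at h2
    linarith [h2]
  have hcs : cesaro f y N (φ.compContinuous (⟨f, f.continuous⟩ : C(X,X))) n - cesaro f y N φ n
      = ((φ (f^[m] y) : ℝ) - (φ y : ℝ)) / ((N:ℝ) * ((n:ℝ) + 1)) := by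
    rw [cesaro, cesaro, key, ← hmdef]
    ring
  rw [hcs, abs_div, abs_of_pos hm, div_le_div_iff_of_pos_right hm]
  have b1 := hC (f^[m] y)
  have b2 := hC y
  have n1 : (0:ℝ) ≤ (φ (f^[m] y) : ℝ) := (φ _).2
  have n2 : (0:ℝ) ≤ (φ y : ℝ) := (φ _).2
  rw [abs_sub_le_iff]
  constructor <;> linarith

lemma cesaro_ge (Γ : Set X) (hmem : ∀ k : ℕ, f^[k * N] y ∈ Γ) (φ : X →ᵇ ℝ≥0)
    (hφ : ∀ z ∈ Γ, 1 ≤ φ z) (hN : 1 ≤ N) (n : ℕ) : (N:ℝ)⁻¹ ≤ cesaro f y N φ n := by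
  have hNpos : 0 < N := hN
  set S := (Finset.range (n+1)).image (· * N) with hS
  have hsub : S ⊆ Finset.range (N * (n + 1)) := by
    intro j hj
    rw [hS, Finset.mem_image] at hj
    obtain ⟨k, hk, rfl⟩ := hj
    rw [Finset.mem_range] at hk ⊢
    calc k * N = N * k := Nat.mul_comm _ _
      _ < N * (n + 1) := (Nat.mul_lt_mul_left hNpos).mpr hk
  have hsumS : (∑ j ∈ S, (φ (f^[j] y) : ℝ)) = ∑ k ∈ Finset.range (n+1), (φ (f^[k * N] y) : ℝ) := by
    rw [hS, Finset.sum_image]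
    intro a _ b _ hab
    exact Nat.eq_of_mul_eq_mul_right hNpos hab
  have hge1 : ((n:ℝ) + 1) ≤ ∑ j ∈ S, (φ (f^[j] y) : ℝ) := by
    rw [hsumS]
    calc ((n:ℝ) + 1) = ∑ _k ∈ Finset.range (n+1), (1:ℝ) := by
          rw [Finset.sum_const, Finset.card_range]; push_cast; ring
      _ ≤ _ := Finset.sum_le_sum fun k _ => by exact_mod_cast hφ _ (hmem k)
  have hsum : ((n:ℝ) + 1) ≤ ∑ j ∈ Finset.range (N * (n + 1)), (φ (f^[j] y) : ℝ) :=
    le_trans hge1 (Finset.sum_le_sum_of_subset_of_nonneg hsub fun j _ _ => (φ _).2)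
  have hm : (0:ℝ) < (N:ℝ) * ((n:ℝ) + 1) := by positivity
  rw [cesaro, le_div_iff₀ hm]
  calc (N:ℝ)⁻¹ * ((N:ℝ) * ((n:ℝ) + 1)) = (n:ℝ) + 1 := by
        field_simp
    _ ≤ _ := hsum

end cesaro2

lemma exists_ulim (u : ℕ → ℝ) (C : ℝ) (h : ∀ n, u n ∈ Set.Icc (0:ℝ) C) :
    ∃ L, Tendsto u natU (𝓝 L) := by
  have h1 : Tendsto u natU (𝓟 (Set.Icc (0:ℝ) C)) :=
    tendsto_principal.2 (Eventually.of_forall h)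
  obtain ⟨L, -, hL⟩ := isCompact_Icc.ultrafilter_le_nhds (natU.map u)
    (by rwa [Ultrafilter.coe_map])
  refine ⟨L, ?_⟩
  rwa [Ultrafilter.coe_map] at hL

noncomputable def lam0 [TopologicalSpace X] (f : X ≃ₜ X) (y : X) (N : ℕ) (φ : X →ᵇ ℝ≥0) : ℝ :=
  limUnder natU (cesaro f y N φ)

section lam0
variable [TopologicalSpace X] (f : X ≃ₜ X) (y : X) (N : ℕ)

lemma tendsto_lam0 (φ : X →ᵇ ℝ≥0) :
    Tendsto (cesaro f y N φ) natU (𝓝 (lam0 f y N φ)) := by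
  obtain ⟨C, hC0, hC⟩ := bcf_bound φ
  obtain ⟨L, hL⟩ := exists_ulim (cesaro f y N φ) C
    (fun n => ⟨cesaro_nonneg f y N φ n, cesaro_le f y N φ C hC hC0 n⟩)
  rw [lam0, hL.limUnder_eq]
  exact hL

lemma lam0_nonneg (φ : X →ᵇ ℝ≥0) : 0 ≤ lam0 f y N φ :=
  ge_of_tendsto (tendsto_lam0 f y N φ) (Eventually.of_forall fun n => cesaro_nonneg f y N φ n)

lemma lam0_add (φ ψ : X →ᵇ ℝ≥0) :
    lam0 f y N (φ + ψ) = lam0 f y N φ + lam0 f y N ψ := by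
  refine tendsto_nhds_unique (tendsto_lam0 f y N (φ + ψ)) ?_
  have := (tendsto_lam0 f y N φ).add (tendsto_lam0 f y N ψ)
  refine this.congr fun n => (cesaro_add f y N φ ψ n).symm

lemma lam0_smul (c : ℝ≥0) (φ : X →ᵇ ℝ≥0) :
    lam0 f y N (c • φ) = c * lam0 f y N φ := by
  refine tendsto_nhds_unique (tendsto_lam0 f y N (c • φ)) ?_
  have := (tendsto_lam0 f y N φ).const_mul (c : ℝ)
  refine this.congr fun n => (cesaro_smul f y N c φ n).symm

lemma lam0_mono (φ ψ : X →ᵇ ℝ≥0) (h : ∀ x, φ x ≤ ψ x) :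
    lam0 f y N φ ≤ lam0 f y N ψ :=
  le_of_tendsto_of_tendsto' (tendsto_lam0 f y N φ) (tendsto_lam0 f y N ψ)
    (fun n => cesaro_mono f y N φ ψ h n)

lemma lam0_one (hN : 1 ≤ N) : lam0 f y N 1 = 1 :=
  tendsto_nhds_unique (tendsto_lam0 f y N 1)
    (by simpa using tendsto_const_nhds.congr (fun n => (cesaro_one f y N hN n).symm))

lemma lam0_ge (Γ : Set X) (hmem : ∀ k : ℕ, f^[k * N] y ∈ Γ) (φ : X →ᵇ ℝ≥0)
    (hφ : ∀ z ∈ Γ, 1 ≤ φ z) (hN : 1 ≤ N) : (N:ℝ)⁻¹ ≤ lam0 f y N φ :=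
  ge_of_tendsto (tendsto_lam0 f y N φ)
    (Eventually.of_forall fun n => cesaro_ge f y N Γ hmem φ hφ hN n)

lemma lam0_shift (hN : 1 ≤ N) (φ : X →ᵇ ℝ≥0) :
    lam0 f y N (φ.compContinuous (⟨f, f.continuous⟩ : C(X,X))) = lam0 f y N φ := by
  obtain ⟨C, hC0, hC⟩ := bcf_bound φ
  have hdiff : Tendsto (fun n => cesaro f y N (φ.compContinuous (⟨f, f.continuous⟩ : C(X,X))) n
      - cesaro f y N φ n) atTop (𝓝 0) := by
    apply squeeze_zero_norm (fun n => cesaro_shift f y N φ C hC n)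
    apply Tendsto.div_atTop (tendsto_const_nhds (x := 2 * C))
    have hNR : (0:ℝ) < (N:ℝ) := by exact_mod_cast hN
    exact Tendsto.const_mul_atTop hNR
      (tendsto_atTop_add_const_right _ 1 tendsto_natCast_atTop_atTop)
  have h2 : Tendsto (fun n => cesaro f y N (φ.compContinuous (⟨f, f.continuous⟩ : C(X,X))) n)
      natU (𝓝 (lam0 f y N φ + 0)) := by
    have := (tendsto_lam0 f y N φ).add (hdiff.mono_left natU_le)
    exact this.congr fun n => by ring
  rw [add_zero] at h2
  exact tendsto_nhds_unique (tendsto_lam0 f y N _) h2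

end lam0

lemma exists_bcf_cut [TopologicalSpace X] (φ : X →ᵇ ℝ≥0) (u : C(X,ℝ))
    (hu : ∀ x, u x ∈ Set.Icc (0:ℝ) 1) :
    ∃ ψ : X →ᵇ ℝ≥0, ∀ x, ψ x = φ x * Real.toNNReal (u x) := by
  obtain ⟨C, hC0, hC⟩ := bcf_bound φ
  have hval : ∀ x, ((φ x * Real.toNNReal (u x) : ℝ≥0) : ℝ) ∈ Set.Icc (0:ℝ) C := by
    intro x
    refine ⟨by positivity, ?_⟩
    push_cast
    calc (φ x : ℝ) * ((Real.toNNReal (u x)) : ℝ) ≤ C * 1 := by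
          apply mul_le_mul (hC x) ?_ (by positivity) hC0
          rw [Real.coe_toNNReal _ (hu x).1]
          exact (hu x).2
      _ = C := mul_one C
  refine ⟨⟨⟨fun x => φ x * Real.toNNReal (u x), ?_⟩, ⟨C, ?_⟩⟩, fun x => rfl⟩
  · exact (φ.continuous.mul (continuous_real_toNNReal.comp u.continuous))
  · intro x z
    simp only [ContinuousMap.coe_mk]
    rw [NNReal.dist_eq]
    have h1 := hval x
    have h2 := hval z
    rw [abs_sub_le_iff]
    constructor <;> [linarith [h1.2, h2.1] ; linarith [h2.2, h1.1]]

section RieszB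
variable [TopologicalSpace X] (Λ : (X →ᵇ ℝ≥0) →ₗ[ℝ≥0] ℝ≥0)

noncomputable def rieszContentAuxB : TopologicalSpace.Compacts X → ℝ≥0 := fun K =>
  sInf (Λ '' { f : X →ᵇ ℝ≥0 | ∀ x ∈ K, (1 : ℝ≥0) ≤ f x })

theorem rieszContentAuxB_image_nonempty (K : TopologicalSpace.Compacts X) :
    (Λ '' { f : X →ᵇ ℝ≥0 | ∀ x ∈ K, (1 : ℝ≥0) ≤ f x }).Nonempty := by
  rw [Set.image_nonempty]
  use (1 : X →ᵇ ℝ≥0)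
  intro x _
  simp

theorem rieszContentAuxB_mono {K₁ K₂ : TopologicalSpace.Compacts X} (h : K₁ ≤ K₂) :
    rieszContentAuxB Λ K₁ ≤ rieszContentAuxB Λ K₂ :=
  csInf_le_csInf (OrderBot.bddBelow _) (rieszContentAuxB_image_nonempty Λ K₂)
    (Set.image_mono (Set.setOf_subset_setOf.mpr fun _ f_hyp _ x_in_K₁ => f_hyp _ (h x_in_K₁)))

theorem rieszContentAuxB_le {K : TopologicalSpace.Compacts X} {f : X →ᵇ ℝ≥0}
    (h : ∀ x ∈ K, (1 : ℝ≥0) ≤ f x) : rieszContentAuxB Λ K ≤ Λ f :=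
  csInf_le (OrderBot.bddBelow _) (Set.mem_image_of_mem _ h)

theorem exists_lt_rieszContentAuxB_add_pos (K : TopologicalSpace.Compacts X) {ε : ℝ≥0}
    (εpos : 0 < ε) :
    ∃ f : X →ᵇ ℝ≥0, (∀ x ∈ K, (1 : ℝ≥0) ≤ f x) ∧ Λ f < rieszContentAuxB Λ K + ε := by
  obtain ⟨α, ⟨⟨f, f_hyp⟩, α_hyp⟩⟩ :=
    exists_lt_of_csInf_lt (rieszContentAuxB_image_nonempty Λ K)
      (lt_add_of_pos_right (rieszContentAuxB Λ K) εpos)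
  refine ⟨f, f_hyp.left, ?_⟩
  rw [f_hyp.right]
  exact α_hyp

theorem rieszContentAuxB_sup_le (K1 K2 : TopologicalSpace.Compacts X) :
    rieszContentAuxB Λ (K1 ⊔ K2) ≤ rieszContentAuxB Λ K1 + rieszContentAuxB Λ K2 := by
  apply _root_.le_of_forall_pos_le_add
  intro ε εpos
  obtain ⟨f1, hf1⟩ := exists_lt_rieszContentAuxB_add_pos Λ K1 (half_pos εpos)
  obtain ⟨f2, hf2⟩ := exists_lt_rieszContentAuxB_add_pos Λ K2 (half_pos εpos)
  have hu : ∀ x ∈ K1 ⊔ K2, (1 : ℝ≥0) ≤ (f1 + f2) x := by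
    rintro x (x_in_K1 | x_in_K2)
    · exact le_add_right (hf1.left x x_in_K1)
    · exact le_add_left (hf2.left x x_in_K2)
  apply (rieszContentAuxB_le Λ hu).trans
  rw [map_add]
  calc Λ f1 + Λ f2 ≤ (rieszContentAuxB Λ K1 + ε / 2) + (rieszContentAuxB Λ K2 + ε / 2) :=
        (add_lt_add hf1.right hf2.right).le
    _ = _ := by rw [add_assoc, add_comm (ε / 2), add_assoc, add_halves ε, add_assoc]

end RieszB

lemma exists_invariant_measure [MetricSpace X] [CompactSpace X] [MeasurableSpace X] [BorelSpace X]
    (f : X ≃ₜ X) (y : X) (N : ℕ) (hN : 1 ≤ N) (Γ : Set X) (hΓc : IsClosed Γ)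
    (hmem : ∀ k : ℕ, f^[k * N] y ∈ Γ) :
    ∃ μ : Measure X, IsProbabilityMeasure μ ∧ MeasurePreserving f μ μ ∧
      (N : ℝ≥0∞)⁻¹ ≤ μ Γ := by
  classical
  -- the positive linear functional
  set Λ : (X →ᵇ ℝ≥0) →ₗ[ℝ≥0] ℝ≥0 :=
    { toFun := fun φ => (lam0 f y N φ).toNNReal
      map_add' := fun φ ψ => by
        rw [lam0_add]
        exact Real.toNNReal_add (lam0_nonneg f y N φ) (lam0_nonneg f y N ψ)
      map_smul' := fun c φ => by
        rw [lam0_smul, RingHom.id_apply, Real.toNNReal_mul c.coe_nonneg, Real.toNNReal_coe,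
          smul_eq_mul] } with hΛdef
  have hΛ_apply : ∀ φ, Λ φ = (lam0 f y N φ).toNNReal := fun φ => rfl
  have hΛmono : ∀ φ ψ : X →ᵇ ℝ≥0, (∀ x, φ x ≤ ψ x) → Λ φ ≤ Λ ψ := fun φ ψ h =>
    Real.toNNReal_mono (lam0_mono f y N φ ψ h)
  have hΛ1 : Λ 1 = 1 := by
    rw [hΛ_apply, lam0_one f y N hN, Real.toNNReal_one]
  have hΛshift : ∀ φ : X →ᵇ ℝ≥0,
      Λ (φ.compContinuous (⟨f, f.continuous⟩ : C(X,X))) = Λ φ := fun φ => by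
    rw [hΛ_apply, hΛ_apply, lam0_shift f y N hN φ]
  have hΛsymm : ∀ φ : X →ᵇ ℝ≥0,
      Λ (φ.compContinuous (⟨f.symm, f.symm.continuous⟩ : C(X,X))) = Λ φ := fun φ => by
    have h := hΛshift (φ.compContinuous (⟨f.symm, f.symm.continuous⟩ : C(X,X)))
    have heq : (φ.compContinuous (⟨f.symm, f.symm.continuous⟩ : C(X,X))).compContinuous
        (⟨f, f.continuous⟩ : C(X,X)) = φ := by
      ext x
      simp [BoundedContinuousFunction.compContinuous_apply]
    rw [heq] at h
    rw [← h]
  -- the content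
  have hsup_disjoint : ∀ K₁ K₂ : TopologicalSpace.Compacts X, Disjoint (K₁ : Set X) K₂ →
      IsClosed (K₁ : Set X) → IsClosed (K₂ : Set X) →
      rieszContentAuxB Λ (K₁ ⊔ K₂) = rieszContentAuxB Λ K₁ + rieszContentAuxB Λ K₂ := by
    intro K₁ K₂ hdisj hcl₁ hcl₂
    refine le_antisymm (rieszContentAuxB_sup_le Λ K₁ K₂) ?_
    refine le_csInf (rieszContentAuxB_image_nonempty Λ _) ?_
    rintro b ⟨φ, hφ, rfl⟩
    obtain ⟨g, hg0, hg1, hg01⟩ := exists_continuous_zero_one_of_isClosed hcl₁ hcl₂ hdisj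
    obtain ⟨ψ₁, hψ₁⟩ := exists_bcf_cut φ ⟨fun x => 1 - g x, continuous_const.sub g.continuous⟩
      (fun x => ⟨by simp only [ContinuousMap.coe_mk]; linarith [(hg01 x).2],
        by simp only [ContinuousMap.coe_mk]; linarith [(hg01 x).1]⟩)
    obtain ⟨ψ₂, hψ₂⟩ := exists_bcf_cut φ g hg01
    have hsum : ψ₁ + ψ₂ = φ := by
      ext x
      rw [BoundedContinuousFunction.add_apply, hψ₁ x, hψ₂ x, ← mul_add]
      have : Real.toNNReal ((⟨fun x => 1 - g x, continuous_const.sub g.continuous⟩ : C(X,ℝ)) x)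
          + Real.toNNReal (g x) = 1 := by
        rw [← Real.toNNReal_add (by simp; linarith [(hg01 x).2]) (hg01 x).1]
        simp
      rw [this, mul_one]
    have h1 : ∀ x ∈ (K₁ : Set X), 1 ≤ ψ₁ x := by
      intro x hx
      rw [hψ₁ x]
      have : g x = 0 := hg0 hx
      simp only [ContinuousMap.coe_mk, this, sub_zero, Real.toNNReal_one, mul_one]
      exact hφ x (Set.mem_union_left _ hx)
    have h2 : ∀ x ∈ (K₂ : Set X), 1 ≤ ψ₂ x := by
      intro x hx
      rw [hψ₂ x]
      have : g x = 1 := hg1 hx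
      simp only [this, Real.toNNReal_one, mul_one]
      exact hφ x (Set.mem_union_right _ hx)
    calc rieszContentAuxB Λ K₁ + rieszContentAuxB Λ K₂ ≤ Λ ψ₁ + Λ ψ₂ :=
          add_le_add (rieszContentAuxB_le Λ h1) (rieszContentAuxB_le Λ h2)
      _ = Λ (ψ₁ + ψ₂) := (map_add Λ ψ₁ ψ₂).symm
      _ = Λ φ := by rw [hsum]
  set C : MeasureTheory.Content X :=
    { toFun := rieszContentAuxB Λ
      mono' := fun K₁ K₂ h => rieszContentAuxB_mono Λ h
      sup_disjoint' := hsup_disjoint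
      sup_le' := rieszContentAuxB_sup_le Λ } with hCdef
  -- invariance of the content
  have hinv : ∀ K : TopologicalSpace.Compacts X,
      rieszContentAuxB Λ (K.map f f.continuous) = rieszContentAuxB Λ K := by
    intro K
    have hcoe : ((K.map f f.continuous : TopologicalSpace.Compacts X) : Set X) = f '' K := rfl
    apply le_antisymm
    · refine le_csInf (rieszContentAuxB_image_nonempty Λ _) ?_
      rintro b ⟨φ, hφ, rfl⟩
      have hψ : ∀ x ∈ (K.map f f.continuous : TopologicalSpace.Compacts X),
          1 ≤ (φ.compContinuous (⟨f.symm, f.symm.continuous⟩ : C(X,X))) x := by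
        intro z hz
        obtain ⟨x, hx, rfl⟩ := hz
        rw [BoundedContinuousFunction.compContinuous_apply]
        simpa using hφ x hx
      exact (rieszContentAuxB_le Λ hψ).trans (le_of_eq (hΛsymm φ))
    · refine le_csInf (rieszContentAuxB_image_nonempty Λ _) ?_
      rintro b ⟨φ, hφ, rfl⟩
      have hψ : ∀ x ∈ (K : Set X),
          1 ≤ (φ.compContinuous (⟨f, f.continuous⟩ : C(X,X))) x := by
        intro x hx
        rw [BoundedContinuousFunction.compContinuous_apply]
        exact hφ (f x) (Set.mem_image_of_mem f hx)
      exact (rieszContentAuxB_le Λ hψ).trans (le_of_eq (hΛshift φ))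
  have hinv' : ∀ ⦃K : TopologicalSpace.Compacts X⦄,
      C (K.map f f.continuous) = C K := fun K => by
    show ((rieszContentAuxB Λ _ : ℝ≥0) : ℝ≥0∞) = _
    exact_mod_cast congrArg _ (hinv K)
  refine ⟨C.measure, ?_, ?_, ?_⟩
  · -- probability
    constructor
    rw [C.measure_apply MeasurableSet.univ,
      C.outerMeasure_of_isOpen Set.univ isOpen_univ]
    have hrc_top : rieszContentAuxB Λ ⊤ = 1 := by
      apply le_antisymm
      · have h := rieszContentAuxB_le Λ (K := ⊤) (f := 1) (fun x _ => le_refl 1)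
        rwa [hΛ1] at h
      · refine le_csInf (rieszContentAuxB_image_nonempty Λ _) ?_
        rintro b ⟨φ, hφ, rfl⟩
        rw [← hΛ1]
        exact hΛmono 1 φ (fun x => by simpa using hφ x trivial)
    apply le_antisymm
    · have h := C.innerContent_le ⟨Set.univ, isOpen_univ⟩ ⊤ (Set.subset_univ _)
      rw [show C ⊤ = ((rieszContentAuxB Λ ⊤ : ℝ≥0) : ℝ≥0∞) from rfl, hrc_top] at h
      exact_mod_cast h
    · have h := C.le_innerContent ⊤ ⟨Set.univ, isOpen_univ⟩ (Set.subset_univ _)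
      rw [show C ⊤ = ((rieszContentAuxB Λ ⊤ : ℝ≥0) : ℝ≥0∞) from rfl, hrc_top] at h
      exact_mod_cast h
  · -- measure preserving
    refine ⟨f.continuous.measurable, ?_⟩
    refine Measure.ext fun s hs => ?_
    rw [Measure.map_apply f.continuous.measurable hs,
      C.measure_apply (hs.preimage f.continuous.measurable), C.measure_apply hs]
    exact C.outerMeasure_preimage f hinv' s
  · -- measure of Γ
    have hΓcpt : IsCompact Γ := hΓc.isCompact
    have hrcΓ : ((N:ℝ≥0))⁻¹ ≤ rieszContentAuxB Λ ⟨Γ, hΓcpt⟩ := by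
      refine le_csInf (rieszContentAuxB_image_nonempty Λ _) ?_
      rintro b ⟨φ, hφ, rfl⟩
      have h := lam0_ge f y N Γ hmem φ hφ hN
      have h2 : ((N:ℝ)⁻¹).toNNReal ≤ (lam0 f y N φ).toNNReal :=
        Real.toNNReal_mono h
      have he : ((N:ℝ)⁻¹).toNNReal = ((N:ℝ≥0))⁻¹ := by
        rw [Real.toNNReal_inv]
        congr 1
        rw [show ((N:ℝ)) = ((N:ℝ≥0):ℝ) by norm_cast]
        exact Real.toNNReal_coe
      rw [he] at h2
      exact h2
    have hN0 : (N : ℝ≥0) ≠ 0 := Nat.cast_ne_zero.mpr (by omega)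
    rw [C.measure_apply hΓc.measurableSet]
    calc (N : ℝ≥0∞)⁻¹ = (((N:ℝ≥0)⁻¹ : ℝ≥0) : ℝ≥0∞) := by
          rw [ENNReal.coe_inv hN0, ENNReal.coe_natCast]
      _ ≤ C ⟨Γ, hΓcpt⟩ := ENNReal.coe_le_coe.mpr hrcΓ
      _ ≤ C.outerMeasure Γ := C.le_outerMeasure_compacts _

theorem strongMeasExpansive_shadowing_implies_strongPeriodicShadowing
    [MetricSpace X] [CompactSpace X] [MeasurableSpace X] [BorelSpace X]
    (f : X ≃ₜ X) (hsme : StrongMeasExpansive f) (hsh : ShadowingZ f) :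
    StrongPeriodicShadowingZ f := by
  obtain ⟨e, he, hexp⟩ := hsme
  intro ε hε
  have hε0 : 0 < min ε (e/2) := lt_min hε (by linarith)
  obtain ⟨δ, hδ, hδsh⟩ := hsh _ hε0
  refine ⟨δ, hδ, ?_⟩
  intro N hN x hx hper
  obtain ⟨y, hy⟩ := hδsh x hx
  have hperk : ∀ (k : ℕ) (i : ℤ), x (i + (k * N : ℕ)) = x i := by
    intro k
    induction k with
    | zero => simp
    | succ k ih =>
      intro i
      have h1 : (i + ((k+1) * N : ℕ) : ℤ) = (i + (k * N : ℕ)) + (N : ℕ) := by push_cast; ring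
      rw [h1, hper, ih]
  have hmem : ∀ k : ℕ, f^[k * N] y ∈ Gamma f e y := by
    intro k i
    have h1 : zit f i (f^[k * N] y) = zit f (i + (k * N : ℕ)) y := by
      rw [zit_add, zit_natCast]
    rw [h1]
    have h2 := hy i
    have h3 := hy (i + (k * N : ℕ))
    rw [hperk k i] at h3
    have hcalc : dist (zit f i y) (zit f (i + (k*N:ℕ)) y) < e := by
      calc dist (zit f i y) (zit f (i + (k*N:ℕ)) y) ≤
          dist (zit f i y) (x i) + dist (x i) (zit f (i + (k*N:ℕ)) y) := dist_triangle _ _ _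
        _ < min ε (e/2) + min ε (e/2) := add_lt_add h2 (by rw [dist_comm]; exact h3)
        _ ≤ e/2 + e/2 := add_le_add (min_le_right _ _) (min_le_right _ _)
        _ = e := by ring
    exact le_of_lt hcalc
  have hΓc : IsClosed (Gamma f e y) := by
    have : Gamma f e y = ⋂ i : ℤ, {w | dist (zit f i y) (zit f i w) ≤ e} := by
      ext w
      simp [Gamma, Set.mem_iInter]
    rw [this]
    exact isClosed_iInter fun i =>
      isClosed_le (continuous_const.dist (continuous_zit f i)) continuous_const
  obtain ⟨μ, hprob, hpres, hbound⟩ := exists_invariant_measure f y N hN _ hΓc hmem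
  have hexpy : μ (Gamma f e y) = μ {y} := hexp μ hprob hpres y
  have hy_big : (N : ENNReal)⁻¹ ≤ μ {y} := hexpy ▸ hbound
  have hinv_ne : (N : ENNReal)⁻¹ ≠ 0 := ENNReal.inv_ne_zero.mpr (ENNReal.natCast_ne_top N)
  have hy_ne : μ {y} ≠ 0 := fun h0 => hinv_ne (le_antisymm (h0 ▸ hy_big) (zero_le))
  have hy_top : μ {y} ≠ ⊤ := measure_ne_top μ _
  have hfix : f^[N] y = y := by
    by_contra hne
    have hwΓ : f^[N] y ∈ Gamma f e y := by simpa [one_mul] using hmem 1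
    have hyΓ : y ∈ Gamma f e y := fun i => by simp [le_of_lt he]
    have hsub : {y} ∪ {f^[N] y} ⊆ Gamma f e y :=
      Set.union_subset (Set.singleton_subset_iff.mpr hyΓ) (Set.singleton_subset_iff.mpr hwΓ)
    have hdisj : Disjoint ({y} : Set X) {f^[N] y} :=
      Set.disjoint_singleton.mpr fun h => hne h.symm
    have hwy : μ {y} ≤ μ {f^[N] y} := by
      have hp : MeasurePreserving f^[N] μ μ := hpres.iterate N
      have h1 : μ (f^[N] ⁻¹' {f^[N] y}) = μ {f^[N] y} :=
        hp.measure_preimage (measurableSet_singleton _).nullMeasurableSet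
      have h2 : ({y} : Set X) ⊆ f^[N] ⁻¹' {f^[N] y} := by simp
      calc μ {y} ≤ μ (f^[N] ⁻¹' {f^[N] y}) := measure_mono h2
        _ = μ {f^[N] y} := h1
    have hunion : μ ({y} ∪ {f^[N] y}) = μ {y} + μ {f^[N] y} :=
      measure_union hdisj (measurableSet_singleton _)
    have hw_ne : μ {f^[N] y} ≠ 0 := fun h0 => hy_ne (le_antisymm (h0 ▸ hwy) (zero_le))
    have hlt : μ {y} < μ {y} + μ {f^[N] y} := ENNReal.lt_add_right hy_top hw_ne
    have hle : μ {y} + μ {f^[N] y} ≤ μ {y} := by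
      calc μ {y} + μ {f^[N] y} = μ ({y} ∪ {f^[N] y}) := hunion.symm
        _ ≤ μ (Gamma f e y) := measure_mono hsub
        _ = μ {y} := hexpy
    exact absurd (lt_of_lt_of_le hlt hle) (lt_irrefl _)
  exact ⟨y, hfix, fun i => lt_of_lt_of_le (hy i) (min_le_left _ _)⟩
end
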